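/- Let t̂_1 < ⋯ < t̂_k be the Gauss points of (0,1). Let L^{G}_1, …, L^{G}_k be the Lagrange basis polynomials (of degree k−1) associated with the nodes t̂_1, …, t̂_k, and let L^{G,0}_0, L^{G,0}_1, …, L^{G,0}_k be the Lagrange basis polynomials (of degree k) associated with the augmented nodes 0, t̂_1, …, t̂_k. Define the k×k real matrix M by m_{ij} = ∫_0^1 (L^{G,0}_j)′(t) · L^{G}_i(t) dt for i, j = 1, …, k, and let D = diag(t̂_1, …, t̂_k). Then the matrix M̃ = D^{−1/2} M D^{1/2} is positive definite in the sense that xᵀ M̃ x > 0 for every nonzero x ∈ ℝ^k. (Positive definiteness of the similarity-transformed Gauss collocation matrix, due to Karakashian–Makridakis and used in the proof of Lemma 5.8.) -/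

import Mathlib

open Polynomial MeasureTheory intervalIntegral

set_option maxHeartbeats 1000000 in
private lemma aux_sum_integral {n : ℕ} (f g : Fin n → Polynomial ℝ) (c d : Fin n → ℝ) :
    ∑ i : Fin n, ∑ j : Fin n,
        (c i * d j) * ∫ s in (0:ℝ)..1, (f j).eval s * (g i).eval s
      = ∫ s in (0:ℝ)..1,
        (∑ j : Fin n, C (d j) * f j).eval s * (∑ i : Fin n, C (c i) * g i).eval s := by
  have hint : ∀ i j : Fin n, IntervalIntegrable
      (fun s => (c i * d j) * ((f j).eval s * (g i).eval s)) MeasureSpace.volume 0 1 :=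
    fun i j => (continuous_const.mul
      ((Polynomial.continuous _).mul (Polynomial.continuous _))).intervalIntegrable _ _
  calc ∑ i : Fin n, ∑ j : Fin n,
        (c i * d j) * ∫ s in (0:ℝ)..1, (f j).eval s * (g i).eval s
      = ∑ i : Fin n, ∑ j : Fin n,
          ∫ s in (0:ℝ)..1, (c i * d j) * ((f j).eval s * (g i).eval s) := by
        refine Finset.sum_congr rfl fun i _ => Finset.sum_congr rfl fun j _ => ?_
        rw [intervalIntegral.integral_const_mul]
    _ = ∑ i : Fin n, ∫ s in (0:ℝ)..1,
          ∑ j : Fin n, (c i * d j) * ((f j).eval s * (g i).eval s) := by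
        refine Finset.sum_congr rfl fun i _ => ?_
        exact (intervalIntegral.integral_finset_sum
          (f := fun j s => c i * d j * ((f j).eval s * (g i).eval s))
          (fun j _ => hint i j)).symm
    _ = ∫ s in (0:ℝ)..1,
          ∑ i : Fin n, ∑ j : Fin n, (c i * d j) * ((f j).eval s * (g i).eval s) := by
        exact (intervalIntegral.integral_finset_sum
          (f := fun i s => ∑ j : Fin n, c i * d j * ((f j).eval s * (g i).eval s))
          (fun i _ => ((continuous_finset_sum Finset.univ fun j _ =>
            continuous_const.mul ((Polynomial.continuous
              (f j)).mul (Polynomial.continuous (g i)))).intervalIntegrable 0 1))).symm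
    _ = ∫ s in (0:ℝ)..1,
        (∑ j : Fin n, C (d j) * f j).eval s * (∑ i : Fin n, C (c i) * g i).eval s := by
        refine intervalIntegral.integral_congr fun s _ => ?_
        rw [eval_finset_sum, eval_finset_sum, Finset.sum_mul_sum, Finset.sum_comm]
        refine Finset.sum_congr rfl fun i _ => Finset.sum_congr rfl fun j _ => ?_
        simp only [eval_mul, eval_C]
        ring

private lemma aux_sq_integral_pos (w : Polynomial ℝ) (hw0 : w ≠ 0) :
    0 < ∫ s in (0:ℝ)..1, (w * w).eval s := by
  rw [intervalIntegral.integral_pos_iff_support_of_nonneg_ae]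
  · refine ⟨one_pos, ?_⟩
    have hsub : Set.Ioc (0:ℝ) 1 \ {s | w.IsRoot s} ⊆
        Function.support (fun s => (w * w).eval s) ∩ Set.Ioc 0 1 := by
      rintro s ⟨hs1, hs2⟩
      refine ⟨?_, hs1⟩
      simp only [Function.mem_support, eval_mul]
      intro hcon
      exact hs2 (mul_self_eq_zero.mp hcon)
    have hroots : MeasureSpace.volume {s : ℝ | w.IsRoot s} = 0 :=
      Set.Finite.measure_zero (Polynomial.finite_setOf_isRoot hw0) _
    have hIoc : MeasureSpace.volume (Set.Ioc (0:ℝ) 1 \ {s | w.IsRoot s}) =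
        MeasureSpace.volume (Set.Ioc (0:ℝ) 1) := measure_diff_null hroots
    have hvol : MeasureSpace.volume (Set.Ioc (0:ℝ) 1) = 1 := by
      rw [Real.volume_Ioc]; norm_num
    calc (0:ENNReal) < 1 := by norm_num
      _ = MeasureSpace.volume (Set.Ioc (0:ℝ) 1 \ {s | w.IsRoot s}) := by rw [hIoc, hvol]
      _ ≤ _ := measure_mono hsub
  · refine Filter.Eventually.of_forall fun s => ?_
    simp only [Pi.zero_apply, eval_mul]
    exact mul_self_nonneg _
  · exact ((w * w).continuous).intervalIntegrable _ _

private lemma aux_integral_deriv (P : Polynomial ℝ) :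
    ∫ s in (0:ℝ)..1, (derivative P).eval s = P.eval 1 - P.eval 0 := by
  apply intervalIntegral.integral_deriv_eq_sub' (fun s => P.eval s)
  · funext s; exact Polynomial.deriv _
  · intro s _; exact P.differentiable.differentiableAt
  · exact ((derivative P).continuous).continuousOn

set_option maxHeartbeats 1000000 in
theorem gauss_collocation_matrix_posDef (k : ℕ) (hk : 1 ≤ k)
    (q : Polynomial ℝ) (hmonic : q.Monic) (hdeg : q.natDegree = k)
    (horth : ∀ p : Polynomial ℝ, p.natDegree < k →
      ∫ s in (0:ℝ)..1, q.eval s * p.eval s = 0)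
    (t : Fin k → ℝ) (htmono : StrictMono t) (htmem : ∀ i, t i ∈ Set.Ioo (0:ℝ) 1)
    (htroot : ∀ i, q.eval (t i) = 0)
    (M : Matrix (Fin k) (Fin k) ℝ)
    (hM : ∀ i j, M i j = ∫ s in (0:ℝ)..1,
      (Polynomial.derivative
          (Lagrange.basis Finset.univ (Fin.cons (0:ℝ) t) j.succ)).eval s *
        (Lagrange.basis Finset.univ t i).eval s)
    (Mt : Matrix (Fin k) (Fin k) ℝ)
    (hMt : ∀ i j, Mt i j = (Real.sqrt (t i))⁻¹ * M i j * Real.sqrt (t j)) :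
    ∀ x : Fin k → ℝ, x ≠ 0 → 0 < dotProduct x (Mt.mulVec x) := by
  intro x hx
  have ht0 : ∀ i, 0 < t i := fun i => (htmem i).1
  have hsq : ∀ i, Real.sqrt (t i) ≠ 0 := fun i => Real.sqrt_ne_zero'.mpr (ht0 i)
  have htinj : Set.InjOn t (Finset.univ : Finset (Fin k)) :=
    fun a _ b _ h => htmono.injective h
  have hcinj : Set.InjOn (Fin.cons (0:ℝ) t : Fin (k+1) → ℝ)
      (Finset.univ : Finset (Fin (k+1))) := by
    intro a _ b _ hab
    induction a using Fin.cases with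
    | zero =>
      induction b using Fin.cases with
      | zero => rfl
      | succ j =>
        simp only [Fin.cons_zero, Fin.cons_succ] at hab
        exact absurd hab.symm (ht0 j).ne'
    | succ i =>
      induction b using Fin.cases with
      | zero =>
        simp only [Fin.cons_zero, Fin.cons_succ] at hab
        exact absurd hab (ht0 i).ne'
      | succ j =>
        simp only [Fin.cons_succ] at hab
        exact congrArg Fin.succ (htmono.injective hab)
  set c : Fin k → ℝ := fun i => (Real.sqrt (t i))⁻¹ * x i with hc
  set d : Fin k → ℝ := fun j => Real.sqrt (t j) * x j with hd
  set u : Polynomial ℝ := Lagrange.interpolate Finset.univ (Fin.cons (0:ℝ) t)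
      (Fin.cons (0:ℝ) d) with hu_def
  set v : Polynomial ℝ := Lagrange.interpolate Finset.univ t c with hv_def
  have hu_sum : u = ∑ j : Fin k, C (d j) *
      Lagrange.basis Finset.univ (Fin.cons (0:ℝ) t) j.succ := by
    rw [hu_def, Lagrange.interpolate_apply, Fin.sum_univ_succ]
    simp
  have hdu : derivative u = ∑ j : Fin k, C (d j) *
      derivative (Lagrange.basis Finset.univ (Fin.cons (0:ℝ) t) j.succ) := by
    rw [hu_sum, derivative_sum]
    exact Finset.sum_congr rfl fun j _ => derivative_C_mul _ _
  -- step A : the quadratic form as an integral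
  have key : dotProduct x (Mt.mulVec x) =
      ∫ s in (0:ℝ)..1, (derivative u).eval s * v.eval s := by
    have expand : dotProduct x (Mt.mulVec x) =
        ∑ i : Fin k, ∑ j : Fin k, (c i * d j) * M i j := by
      rw [dotProduct]
      refine Finset.sum_congr rfl fun i _ => ?_
      rw [Matrix.mulVec, dotProduct, Finset.mul_sum]
      refine Finset.sum_congr rfl fun j _ => ?_
      rw [hMt, hc, hd]
      ring
    rw [expand]
    have expand2 : ∀ i j : Fin k, (c i * d j) * M i j = (c i * d j) *
        ∫ s in (0:ℝ)..1,
          (derivative (Lagrange.basis Finset.univ (Fin.cons (0:ℝ) t) j.succ)).eval s *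
          (Lagrange.basis Finset.univ t i).eval s := by
      intro i j; rw [hM]
    simp only [expand2]
    rw [aux_sum_integral
      (fun j => derivative (Lagrange.basis Finset.univ (Fin.cons (0:ℝ) t) j.succ))
      (fun i => Lagrange.basis Finset.univ t i) c d]
    rw [← hdu, hv_def, Lagrange.interpolate_apply]
  -- step B : u = X * w  for some w
  have hXdvd : X ∣ u := by
    rw [X_dvd_iff, coeff_zero_eq_eval_zero]
    have h0 := Lagrange.eval_interpolate_at_node (s := (Finset.univ : Finset (Fin (k+1))))
      (v := (Fin.cons (0:ℝ) t)) (i := 0) (Fin.cons (0:ℝ) d) hcinj (Finset.mem_univ _)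
    rw [hu_def]
    simpa using h0
  obtain ⟨w, hw⟩ := hXdvd
  have hudeg : u.degree < (k + 1 : ℕ) := by
    have := Lagrange.degree_interpolate_lt
      (s := (Finset.univ : Finset (Fin (k+1)))) (v := (Fin.cons (0:ℝ) t))
      (Fin.cons (0:ℝ) d) hcinj
    rw [hu_def]
    simpa using this
  have hwdeg : w.degree < (k : ℕ) := by
    rcases eq_or_ne w 0 with rfl | hw0
    · simp only [degree_zero]
      exact WithBot.bot_lt_coe _
    · have hu0 : u ≠ 0 := by
        rw [hw]; exact mul_ne_zero X_ne_zero hw0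
      have hnu : u.natDegree < k + 1 :=
        (Polynomial.natDegree_lt_iff_degree_lt hu0).mpr hudeg
      have hmul : u.natDegree = 1 + w.natDegree := by
        rw [hw, Polynomial.natDegree_mul X_ne_zero hw0, natDegree_X]
      have hlt : w.natDegree < k := by omega
      exact (Polynomial.natDegree_lt_iff_degree_lt hw0).mp hlt
  -- eval of u at the nodes
  have hu_eval : ∀ i : Fin k, u.eval (t i) = d i := by
    intro i
    have h0 := Lagrange.eval_interpolate_at_node (s := (Finset.univ : Finset (Fin (k+1))))
      (v := (Fin.cons (0:ℝ) t)) (i := i.succ) (Fin.cons (0:ℝ) d) hcinj (Finset.mem_univ _)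
    rw [hu_def]
    simpa using h0
  -- v = w
  have hvw : v = w := by
    refine Polynomial.eq_of_degrees_lt_of_eval_index_eq
      (Finset.univ : Finset (Fin k)) htinj ?_ ?_ ?_
    · rw [hv_def]
      simpa using Lagrange.degree_interpolate_lt
        (s := (Finset.univ : Finset (Fin k))) (v := t) c htinj
    · simpa using hwdeg
    · intro i _
      have hv_eval : v.eval (t i) = c i := by
        rw [hv_def]; exact Lagrange.eval_interpolate_at_node _ htinj (Finset.mem_univ _)
      have hw_eval : t i * w.eval (t i) = Real.sqrt (t i) * x i := by
        have h3 := hu_eval i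
        rw [hw] at h3
        simp only [eval_mul, eval_X] at h3
        exact h3
      have hss : Real.sqrt (t i) * Real.sqrt (t i) = t i := Real.mul_self_sqrt (ht0 i).le
      rw [hv_eval]
      show (Real.sqrt (t i))⁻¹ * x i = w.eval (t i)
      calc (Real.sqrt (t i))⁻¹ * x i
          = (Real.sqrt (t i))⁻¹ * ((Real.sqrt (t i))⁻¹ * (Real.sqrt (t i) * x i)) := by
            rw [inv_mul_cancel_left₀ (hsq i)]
        _ = (Real.sqrt (t i))⁻¹ * ((Real.sqrt (t i))⁻¹ *
              (Real.sqrt (t i) * Real.sqrt (t i) * w.eval (t i))) := by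
            rw [← hw_eval, hss]
        _ = w.eval (t i) := by
            have hr : (Real.sqrt (t i))⁻¹ * ((Real.sqrt (t i))⁻¹ *
                (Real.sqrt (t i) * Real.sqrt (t i) * w.eval (t i)))
                = ((Real.sqrt (t i))⁻¹ * Real.sqrt (t i)) *
                  (((Real.sqrt (t i))⁻¹ * Real.sqrt (t i)) * w.eval (t i)) := by ring
            rw [hr, inv_mul_cancel₀ (hsq i), one_mul, one_mul]
  -- w ≠ 0
  have hw0 : w ≠ 0 := by
    intro h
    apply hx
    funext i
    have hu0 : u = 0 := by rw [hw, h, mul_zero]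
    have h1 := hu_eval i
    rw [hu0] at h1
    simp only [eval_zero, hd] at h1
    rcases mul_eq_zero.mp h1.symm with h' | h'
    · exact absurd h' (hsq i)
    · simpa using h'
  -- the integrand identity
  have hpoly : (2 : Polynomial ℝ) * (derivative u * w) =
      (w * w) + derivative (X * (w * w)) := by
    rw [hw]
    simp only [derivative_mul, derivative_X]
    ring
  have heval : ∀ s : ℝ, (derivative u).eval s * w.eval s =
      (1/2 : ℝ) * ((w * w).eval s + (derivative (X * (w * w))).eval s) := by
    intro s
    have h2 := congrArg (Polynomial.eval s) hpoly
    simp only [eval_mul, eval_add, eval_ofNat] at h2 ⊢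
    linarith [h2]
  rw [key, hvw]
  rw [intervalIntegral.integral_congr (g := fun s =>
    (1/2 : ℝ) * ((w * w).eval s + (derivative (X * (w * w))).eval s))
    (fun s _ => heval s)]
  rw [intervalIntegral.integral_const_mul,
    intervalIntegral.integral_add
      (((w * w).continuous).intervalIntegrable _ _)
      (((derivative (X * (w * w))).continuous).intervalIntegrable _ _),
    aux_integral_deriv]
  have h10 : (X * (w * w)).eval 1 - (X * (w * w)).eval 0 = w.eval 1 * w.eval 1 := by
    simp [eval_mul]
  rw [h10]
  nlinarith [aux_sq_integral_pos w hw0, mul_self_nonneg (w.eval 1)]
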